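/- Fix an integer n ≥ 2 and set ζ = 2π/n. Then the complex number ∑_{j=1}^{n−1} (1 − e^{ijζ})/|1 − e^{ijζ}|³ is real and equals (1/4)·∑_{j=1}^{n−1} 1/sin(jπ/n). -/

import Mathlib

open Finset

/-- For `n ≥ 2` and `ζ = 2π/n`, the complex number
`∑_{j=1}^{n-1} (1 - e^{ijζ})/|1 - e^{ijζ}|³` is real and equals
`(1/4) ∑_{j=1}^{n-1} 1/sin(jπ/n)`. -/
theorem ring_sum_is_real
    (n : ℕ) (hn : 2 ≤ n) (ζ : ℝ) (hζ : ζ = 2 * Real.pi / n) :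
    ∑ j ∈ Finset.Ico 1 n,
        (1 - Complex.exp (Complex.I * (j : ℂ) * (ζ : ℂ))) /
          ((‖1 - Complex.exp (Complex.I * (j : ℂ) * (ζ : ℂ))‖ : ℝ) : ℂ) ^ 3 =
      (((1 / 4) * ∑ j ∈ Finset.Ico 1 n, 1 / Real.sin (j * Real.pi / n) : ℝ) : ℂ) := by
  have hnR : (0:ℝ) < n := by positivity
  have key : ∀ j ∈ Finset.Ico 1 n,
      (1 - Complex.exp (Complex.I * (j : ℂ) * (ζ : ℂ))) /
          ((‖1 - Complex.exp (Complex.I * (j : ℂ) * (ζ : ℂ))‖ : ℝ) : ℂ) ^ 3 =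
      ((1/(4 * Real.sin (j*Real.pi/n)) : ℝ) : ℂ)
        - Complex.I * ((Real.cos (j*Real.pi/n) / (4 * (Real.sin (j*Real.pi/n))^2) : ℝ) : ℂ) := by
    intro j hj
    simp only [Finset.mem_Ico] at hj
    set φ : ℝ := j * Real.pi / n with hφ
    have hφpos : 0 < φ := by
      have : (0:ℝ) < j := by exact_mod_cast hj.1
      rw [hφ]; positivity
    have hφlt : φ < Real.pi := by
      rw [hφ, div_lt_iff₀ hnR]
      have : (j:ℝ) < n := by exact_mod_cast hj.2
      nlinarith [Real.pi_pos]
    have hs : 0 < Real.sin φ := Real.sin_pos_of_pos_of_lt_pi hφpos hφlt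
    set s := Real.sin φ
    set c := Real.cos φ
    have hθ : (j:ℝ) * ζ = 2 * φ := by rw [hζ, hφ]; ring
    have hIθ : Complex.I * (j : ℂ) * (ζ : ℂ) = ((( (j:ℝ) * ζ : ℝ)) : ℂ) * Complex.I := by
      push_cast; ring
    have hexp : 1 - Complex.exp (Complex.I * (j : ℂ) * (ζ : ℂ))
        = ((2*s : ℝ) : ℂ) * (↑s - ↑c * Complex.I) := by
      rw [hIθ, Complex.exp_mul_I, ← Complex.ofReal_cos, ← Complex.ofReal_sin, hθ]
      have hc2 : Real.cos (2*φ) = 1 - 2 * s^2 := by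
        rw [Real.cos_two_mul']; nlinarith [Real.sin_sq_add_cos_sq φ]
      have hs2 : Real.sin (2*φ) = 2 * s * c := Real.sin_two_mul φ
      rw [hc2, hs2]
      push_cast
      ring
    have habs1 : ‖(↑s - ↑c * Complex.I : ℂ)‖ = 1 := by
      rw [Complex.norm_def, Complex.normSq_apply]
      simp
      nlinarith [Real.sin_sq_add_cos_sq φ]
    have habs : ‖1 - Complex.exp (Complex.I * (j : ℂ) * (ζ : ℂ))‖ = 2*s := by
      rw [hexp, norm_mul, habs1, Complex.norm_real, Real.norm_eq_abs, abs_of_pos (by linarith)]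
      ring
    rw [habs, hexp]
    have h2s : ((2*s:ℝ):ℂ) ≠ 0 := by
      simp only [ne_eq, Complex.ofReal_eq_zero]; positivity
    have hs' : s ≠ 0 := ne_of_gt hs
    rw [div_eq_iff (pow_ne_zero 3 h2s)]
    have hsC : (s:ℂ) ≠ 0 := Complex.ofReal_ne_zero.mpr hs'
    push_cast
    field_simp
    ring
  rw [Finset.sum_congr rfl key]
  rw [Finset.sum_sub_distrib, ← Finset.mul_sum]
  have hne : (n:ℝ) ≠ 0 := ne_of_gt hnR
  have himagR : ∑ j ∈ Finset.Ico 1 n,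
      (Real.cos (j*Real.pi/n) / (4 * (Real.sin (j*Real.pi/n))^2)) = 0 := by
    apply Finset.sum_involution (fun a _ => n - a)
    · intro a ha
      simp only [Finset.mem_Ico] at ha
      have hcast : ((n - a : ℕ) : ℝ) = (n:ℝ) - a := by
        rw [Nat.cast_sub (le_of_lt ha.2)]
      have harg : ((n - a : ℕ) : ℝ) * Real.pi / n = Real.pi - a * Real.pi / n := by
        rw [hcast]; field_simp
      rw [harg, Real.cos_pi_sub, Real.sin_pi_sub]
      ring
    · intro a ha hfa
      simp only [Finset.mem_Ico] at ha
      intro hcontra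
      apply hfa
      have h2a : n = 2 * a := by omega
      have : (a:ℝ) * Real.pi / n = Real.pi / 2 := by
        rw [h2a]; push_cast
        have ha0 : (a:ℝ) ≠ 0 := by
          have : 0 < a := ha.1
          positivity
        field_simp
      rw [this, Real.cos_pi_div_two]
      simp
    · intro a ha
      simp only [Finset.mem_Ico] at ha ⊢
      omega
    · intro a ha
      simp only [Finset.mem_Ico] at ha
      omega
  have himag : ∑ j ∈ Finset.Ico 1 n,
      ((Real.cos (j*Real.pi/n) / (4 * (Real.sin (j*Real.pi/n))^2) : ℝ) : ℂ) = 0 := by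
    rw [← Complex.ofReal_sum, himagR, Complex.ofReal_zero]
  rw [himag, mul_zero, sub_zero, ← Complex.ofReal_sum]
  norm_cast
  rw [Finset.mul_sum]
  apply Finset.sum_congr rfl
  intro j hj
  ring
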